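/- Let p ≡ 3 (mod 4) be an odd prime. Then EGZ_p^{(2)}(ℤ_p) ≥ 2p, i.e., there is a sequence over ℤ/pℤ of length 2p − 1 containing no subsequence of length p on which e₂ vanishes mod p. -/

import Mathlib

open Finset

/-- The `m`-th elementary symmetric expression of the subsequence of `g` selected
by the index set `J`. -/
def eSym {n : ℕ} {R : Type*} [CommRing R] (m : ℕ) (g : Fin n → R) (J : Finset (Fin n)) : R :=
  ∑ T ∈ J.powersetCard m, ∏ i ∈ T, g i

lemma eSym2_insert {n : ℕ} {R : Type*} [CommRing R] (g : Fin n → R) {a : Fin n}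
    {J : Finset (Fin n)} (ha : a ∉ J) :
    eSym 2 g (insert a J) = eSym 2 g J + g a * ∑ i ∈ J, g i := by
  unfold eSym
  rw [show (2:ℕ) = Nat.succ 1 from rfl, powersetCard_succ_insert ha]
  rw [Finset.sum_union]
  · congr 1
    rw [Finset.sum_image]
    · rw [powersetCard_one, Finset.sum_map, Finset.mul_sum]
      refine Finset.sum_congr rfl fun i hi => ?_
      simp only [Function.Embedding.coeFn_mk]
      rw [Finset.prod_insert (by simp; rintro rfl; exact ha hi), Finset.prod_singleton]
    · intro T hT U hU hTU
      have hT' : a ∉ T := fun h => ha ((mem_powersetCard.mp hT).1 h)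
      have hU' : a ∉ U := fun h => ha ((mem_powersetCard.mp hU).1 h)
      rw [← Finset.erase_insert hT', ← Finset.erase_insert hU', hTU]
  · rw [Finset.disjoint_left]
    intro T hT hT'
    obtain ⟨U, hU, rfl⟩ := Finset.mem_image.mp hT'
    exact ha ((mem_powersetCard.mp hT).1 (Finset.mem_insert_self a U))

lemma two_mul_eSym2 {n : ℕ} {R : Type*} [CommRing R] (g : Fin n → R) (J : Finset (Fin n)) :
    2 * eSym 2 g J = (∑ i ∈ J, g i)^2 - ∑ i ∈ J, (g i)^2 := by
  induction J using Finset.induction with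
  | empty =>
    have h : ((∅ : Finset (Fin n)).powersetCard 2) = ∅ := by simp
    simp [eSym, h]
  | insert _ _ ha ih =>
    rename_i a J
    rw [eSym2_insert g ha, Finset.sum_insert ha, Finset.sum_insert ha]
    ring_nf
    ring_nf at ih
    linear_combination ih

lemma card_le_of_val_mem {n : ℕ} (S : Finset (Fin n)) (T : Finset ℕ)
    (h : ∀ i ∈ S, (i : ℕ) ∈ T) : S.card ≤ T.card := by
  rw [← Finset.card_image_of_injective S Fin.val_injective]
  exact Finset.card_le_card (fun x hx => by
    obtain ⟨i, hi, rfl⟩ := Finset.mem_image.mp hx; exact h i hi)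

theorem stmt_16 (p : ℕ) (hp : p.Prime) (hp4 : p % 4 = 3) :
    ∃ g : Fin (2 * p - 1) → ZMod p,
      ∀ J : Finset (Fin (2 * p - 1)), J.card = p → eSym 2 g J ≠ 0 := by
  haveI : Fact p.Prime := ⟨hp⟩
  have hp3 : 3 ≤ p := by
    rcases Nat.lt_or_ge p 3 with h | h
    · interval_cases p <;> omega
    · exact h
  set g : Fin (2 * p - 1) → ZMod p :=
    fun i => if (i:ℕ) < p - 2 then 0 else if (i:ℕ) < 2*p - 3 then 2 else 1 with hgdef
  refine ⟨g, fun J hJ h0 => ?_⟩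
  set Pb : Fin (2*p-1) → Prop := fun i => ¬ (i:ℕ) < p - 2 ∧ (i:ℕ) < 2*p - 3 with hPb
  set Pc : Fin (2*p-1) → Prop := fun i => ¬ (i:ℕ) < p - 2 ∧ ¬ (i:ℕ) < 2*p - 3 with hPc
  set Jb := J.filter Pb with hJb
  set Jc := J.filter Pc with hJc
  set j := Jb.card with hj
  set k := Jc.card with hk
  -- structural facts
  have hgboth : ∀ i : Fin (2*p-1),
      g i = (if Pb i then (2 : ZMod p) else 0) + (if Pc i then 1 else 0) ∧
      (g i)^2 = (if Pb i then (4 : ZMod p) else 0) + (if Pc i then 1 else 0) := by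
    intro i
    by_cases h1 : (i:ℕ) < p - 2
    · have e1 : g i = 0 := by simp only [hgdef]; rw [if_pos h1]
      simp only [e1, if_neg (fun h : Pb i => h.1 h1), if_neg (fun h : Pc i => h.1 h1)]
      norm_num
    · by_cases h2 : (i:ℕ) < 2*p - 3
      · have e1 : g i = 2 := by simp only [hgdef]; rw [if_neg h1, if_pos h2]
        simp only [e1, if_pos (show Pb i from ⟨h1, h2⟩), if_neg (fun h : Pc i => h.2 h2)]
        norm_num
      · have e1 : g i = 1 := by simp only [hgdef]; rw [if_neg h1, if_neg h2]
        simp only [e1, if_neg (fun h : Pb i => h2 h.2), if_pos (show Pc i from ⟨h1, h2⟩)]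
        norm_num
  have hgval : ∀ i : Fin (2*p-1),
      g i = (if Pb i then (2 : ZMod p) else 0) + (if Pc i then 1 else 0) :=
    fun i => (hgboth i).1
  have hgsq : ∀ i : Fin (2*p-1),
      (g i)^2 = (if Pb i then (4 : ZMod p) else 0) + (if Pc i then 1 else 0) :=
    fun i => (hgboth i).2
  have hsum : ∑ i ∈ J, g i = 2 * (j : ZMod p) + (k : ZMod p) := by
    rw [Finset.sum_congr rfl (fun i _ => hgval i), Finset.sum_add_distrib,
      ← Finset.sum_filter, ← Finset.sum_filter, ← hJb, ← hJc,
      Finset.sum_const, Finset.sum_const, nsmul_eq_mul, nsmul_eq_mul]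
    ring
  have hsq : ∑ i ∈ J, (g i)^2 = 4 * (j : ZMod p) + (k : ZMod p) := by
    rw [Finset.sum_congr rfl (fun i _ => hgsq i), Finset.sum_add_distrib,
      ← Finset.sum_filter, ← Finset.sum_filter, ← hJb, ← hJc,
      Finset.sum_const, Finset.sum_const, nsmul_eq_mul, nsmul_eq_mul]
    ring
  -- counting
  have hjle : j ≤ p - 1 := by
    have := card_le_of_val_mem Jb (Finset.Ico (p-2) (2*p-3)) (fun i hi => by
      have := (Finset.mem_filter.mp hi).2
      simp only [hPb] at this
      exact Finset.mem_Ico.mpr ⟨by omega, this.2⟩)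
    rwa [Nat.card_Ico, show 2*p-3 - (p-2) = p - 1 by omega] at this
  have hkle : k ≤ 2 := by
    have := card_le_of_val_mem Jc (Finset.Ico (2*p-3) (2*p-1)) (fun i hi => by
      have h2 := (Finset.mem_filter.mp hi).2
      simp only [hPc] at h2
      exact Finset.mem_Ico.mpr ⟨by omega, i.isLt⟩)
    rwa [Nat.card_Ico, show 2*p-1 - (2*p-3) = 2 by omega] at this
  have hjk2 : 2 ≤ j + k := by
    have h1 := Finset.card_filter_add_card_filter_not
      (s := J) (p := fun i : Fin (2*p-1) => (i:ℕ) < p - 2)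
    have h2 := Finset.card_filter_add_card_filter_not
      (s := J.filter (fun i : Fin (2*p-1) => ¬ (i:ℕ) < p - 2))
      (p := fun i : Fin (2*p-1) => (i:ℕ) < 2*p - 3)
    rw [Finset.filter_filter, Finset.filter_filter] at h2
    have hbeq : J.filter (fun i : Fin (2*p-1) => ¬ (i:ℕ) < p - 2 ∧ (i:ℕ) < 2*p - 3) = Jb := rfl
    have hceq : J.filter (fun i : Fin (2*p-1) => ¬ (i:ℕ) < p - 2 ∧ ¬ (i:ℕ) < 2*p - 3) = Jc := rfl
    rw [hbeq, hceq] at h2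
    have hale : (J.filter (fun i : Fin (2*p-1) => (i:ℕ) < p - 2)).card ≤ p - 2 := by
      have := card_le_of_val_mem (J.filter (fun i : Fin (2*p-1) => (i:ℕ) < p - 2))
        (Finset.range (p-2)) (fun i hi => Finset.mem_range.mpr (Finset.mem_filter.mp hi).2)
      rwa [Finset.card_range] at this
    omega
  have hjltp : j < p := by omega
  -- cast facts
  have h2ne : (2 : ZMod p) ≠ 0 := by
    have : ((2:ℕ) : ZMod p) ≠ 0 := by
      rw [Ne, ZMod.natCast_eq_zero_iff]
      intro h; exact absurd (Nat.le_of_dvd (by norm_num) h) (by omega)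
    simpa using this
  have hcast : ∀ m : ℕ, m < p → (m : ZMod p) = (j : ZMod p) → j = m := by
    intro m hm hmj
    have := congrArg ZMod.val hmj
    rw [ZMod.val_cast_of_lt hm, ZMod.val_cast_of_lt hjltp] at this
    exact this.symm
  -- main identity
  have hmain : (0 : ZMod p) = (2 * (j:ZMod p) + k)^2 - (4 * (j:ZMod p) + k) := by
    have := two_mul_eSym2 g J
    rw [hsum, hsq, h0, mul_zero] at this
    exact this
  set x := (j : ZMod p) with hx
  interval_cases k
  · -- k = 0 : 4x(x-1) = 0
    have hxx : (2:ZMod p) * 2 * (x * (x - 1)) = 0 := by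
      push_cast at hmain; linear_combination -hmain
    rcases mul_eq_zero.mp hxx with h | h
    · exact absurd (mul_eq_zero.mp h) (by simp [h2ne])
    rcases mul_eq_zero.mp h with h | h
    · have := hcast 0 (by omega) (by simpa using h.symm)
      omega
    · have : x = 1 := by linear_combination h
      have := hcast 1 (by omega) (by simpa using this.symm)
      omega
  · -- k = 1 : 4x² = 0
    have hxx : (2:ZMod p) * 2 * (x * x) = 0 := by
      push_cast at hmain; linear_combination -hmain
    rcases mul_eq_zero.mp hxx with h | h
    · exact absurd (mul_eq_zero.mp h) (by simp [h2ne])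
    rcases mul_eq_zero.mp h with h | h <;>
    · have := hcast 0 (by omega) (by simpa using h.symm)
      omega
  · -- k = 2 : 2(2x²+2x+1) = 0 → (2x+1)² = -1
    have hxx : (2:ZMod p) * (2*x^2 + 2*x + 1) = 0 := by
      push_cast at hmain; linear_combination -hmain
    rcases mul_eq_zero.mp hxx with h | h
    · exact h2ne h
    · have hsq : (-1 : ZMod p) = (2*x+1) * (2*x+1) := by linear_combination (-2 : ZMod p) * h
      have : IsSquare (-1 : ZMod p) := ⟨2*x+1, hsq⟩
      rw [ZMod.exists_sq_eq_neg_one_iff] at this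
      exact this hp4
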